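/- (Expectation bound on the maximum eigenvalue via the Laplace transform) Let X be a random real symmetric d×d matrix defined on a finite probability space. Then for every θ > 0, E[λ_max(X)] ≤ (1/θ)·log( E[ tr( exp(θ·X) ) ] ), and consequently E[λ_max(X)] ≤ inf_{θ>0} (1/θ)·log( E[ tr( exp(θ·X) ) ] ). -/

import Mathlib

open Finset Matrix

/-- `lamMax A` is the largest eigenvalue of a real symmetric matrix `A`,
expressed as the supremum of the Rayleigh quotient over unit vectors. -/
noncomputable def lamMax {d : ℕ} (A : Matrix (Fin d) (Fin d) ℝ) : ℝ :=
  sSup {r : ℝ | ∃ x : Fin d → ℝ, (∑ j, x j ^ 2) = 1 ∧ r = x ⬝ᵥ A.mulVec x}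

section Aux

variable {d : ℕ}

lemma trace_exp_eq' (A : Matrix (Fin d) (Fin d) ℝ) (hA : A.IsHermitian) (θ : ℝ) :
    trace (NormedSpace.exp (θ • A)) = ∑ i, Real.exp (θ * hA.eigenvalues i) := by
  set U : Matrix (Fin d) (Fin d) ℝ := (hA.eigenvectorUnitary : Matrix (Fin d) (Fin d) ℝ) with hUdef
  have hsU : star U * U = 1 := by
    rw [← Unitary.coe_star]; exact Unitary.coe_star_mul_self hA.eigenvectorUnitary
  have hUs : U * star U = 1 := by
    rw [← Unitary.coe_star]; exact Unitary.coe_mul_star_self hA.eigenvectorUnitary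
  have hU : IsUnit U := ⟨⟨U, star U, hUs, hsU⟩, rfl⟩
  have hinv : U⁻¹ = star U := Matrix.inv_eq_left_inv hsU
  have hspec : θ • A = U * diagonal (fun i => θ * hA.eigenvalues i) * U⁻¹ := by
    rw [hinv]
    conv_lhs => rw [hA.spectral_theorem, Unitary.conjStarAlgAut_apply]
    conv_lhs => rw [← smul_mul_assoc, ← mul_smul_comm]
    congr 2
    rw [← Matrix.diagonal_smul]
    congr 1
  rw [hspec, Matrix.exp_conj _ _ hU, Matrix.exp_diagonal]
  rw [Matrix.trace_mul_comm, ← mul_assoc, hinv, hsU, one_mul, Matrix.trace_diagonal]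
  congr 1
  ext i
  simp [Real.exp_eq_exp_ℝ]

lemma rayleigh_le' (A : Matrix (Fin d) (Fin d) ℝ) (hA : A.IsHermitian)
    (M : ℝ) (hM : ∀ i, hA.eigenvalues i ≤ M)
    (x : Fin d → ℝ) (hx : (∑ j, x j ^ 2) = 1) :
    x ⬝ᵥ A.mulVec x ≤ M := by
  set U : Matrix (Fin d) (Fin d) ℝ := (hA.eigenvectorUnitary : Matrix (Fin d) (Fin d) ℝ) with hUdef
  have hUs : U * star U = 1 := by
    rw [← Unitary.coe_star]; exact Unitary.coe_mul_star_self hA.eigenvectorUnitary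
  have hstar : star U = Uᵀ := Matrix.conjTranspose_eq_transpose_of_trivial U
  set y : Fin d → ℝ := Uᵀ.mulVec x with hy
  have hvU : Matrix.vecMul x U = y := by
    rw [hy, Matrix.mulVec_transpose]
  have key : x ⬝ᵥ A.mulVec x = ∑ i, hA.eigenvalues i * y i ^ 2 := by
    conv_lhs => rw [hA.spectral_theorem, Unitary.conjStarAlgAut_apply]
    rw [← Matrix.mulVec_mulVec, ← Matrix.mulVec_mulVec, dotProduct_mulVec, hvU, hstar]
    rw [← hy]
    simp only [dotProduct, Matrix.mulVec_diagonal]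
    congr 1; ext i
    simp [Function.comp]
    ring
  have hysq : ∑ i, y i ^ 2 = 1 := by
    have h1 : ∑ i, y i ^ 2 = y ⬝ᵥ y := by
      simp [dotProduct, sq]
    have h2 : y ⬝ᵥ y = x ⬝ᵥ x := by
      rw [hy, dotProduct_mulVec, ← Matrix.mulVec_transpose, Matrix.transpose_transpose,
        Matrix.mulVec_mulVec, ← hstar, hUs, Matrix.one_mulVec]
    have h3 : x ⬝ᵥ x = 1 := by
      rw [← hx]; simp [dotProduct, sq]
    rw [h1, h2, h3]
  rw [key]
  calc ∑ i, hA.eigenvalues i * y i ^ 2 ≤ ∑ i, M * y i ^ 2 := by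
        apply Finset.sum_le_sum
        intro i _
        exact mul_le_mul_of_nonneg_right (hM i) (sq_nonneg _)
    _ = M := by rw [← Finset.mul_sum, hysq, mul_one]

lemma exp_lamMax_le' (hd : 1 ≤ d) (A : Matrix (Fin d) (Fin d) ℝ) (hA : A.IsHermitian)
    {θ : ℝ} (hθ : 0 < θ) :
    Real.exp (θ * lamMax A) ≤ trace (NormedSpace.exp (θ • A)) := by
  have hne : (Finset.univ : Finset (Fin d)).Nonempty := ⟨⟨0, hd⟩, Finset.mem_univ _⟩
  set M : ℝ := Finset.univ.sup' hne hA.eigenvalues with hMdef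
  have hM : ∀ i, hA.eigenvalues i ≤ M := fun i => Finset.le_sup' _ (Finset.mem_univ i)
  have hlam : lamMax A ≤ M := by
    apply csSup_le
    · refine ⟨Pi.single (⟨0, hd⟩ : Fin d) 1 ⬝ᵥ A.mulVec (Pi.single ⟨0, hd⟩ 1),
        Pi.single ⟨0, hd⟩ 1, ?_, rfl⟩
      simp [Pi.single_apply, sq]
    · rintro r ⟨x, hx, rfl⟩
      exact rayleigh_le' A hA M hM x hx
  obtain ⟨i₀, -, hi₀⟩ := Finset.exists_mem_eq_sup' hne hA.eigenvalues
  rw [trace_exp_eq' A hA θ]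
  calc Real.exp (θ * lamMax A) ≤ Real.exp (θ * hA.eigenvalues i₀) := by
        apply Real.exp_le_exp.2
        have : M = hA.eigenvalues i₀ := hi₀
        exact mul_le_mul_of_nonneg_left (this ▸ hlam) hθ.le
    _ ≤ ∑ i, Real.exp (θ * hA.eigenvalues i) :=
        Finset.single_le_sum (f := fun i => Real.exp (θ * hA.eigenvalues i))
          (fun i _ => (Real.exp_pos _).le) (Finset.mem_univ i₀)

lemma trace_exp_pos' (hd : 1 ≤ d) (A : Matrix (Fin d) (Fin d) ℝ) (hA : A.IsHermitian) (θ : ℝ) :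
    0 < trace (NormedSpace.exp (θ • A)) := by
  rw [trace_exp_eq' A hA θ]
  exact Finset.sum_pos (fun i _ => Real.exp_pos _) ⟨⟨0, hd⟩, Finset.mem_univ _⟩

lemma jensen_log' {Ω : Type} [Fintype Ω] (p t : Ω → ℝ) (hp : ∀ ω, 0 ≤ p ω)
    (hp1 : ∑ ω, p ω = 1) (ht : ∀ ω, 0 < t ω) :
    ∑ ω, p ω * Real.log (t ω) ≤ Real.log (∑ ω, p ω * t ω) := by
  have hgm := Real.geom_mean_le_arith_mean_weighted Finset.univ p t
    (fun ω _ => hp ω) hp1 (fun ω _ => (ht ω).le)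
  have hprodpos : 0 < ∏ ω, t ω ^ p ω :=
    Finset.prod_pos fun ω _ => Real.rpow_pos_of_pos (ht ω) _
  calc ∑ ω, p ω * Real.log (t ω) = Real.log (∏ ω, t ω ^ p ω) := by
        rw [Real.log_prod (fun ω _ => (Real.rpow_pos_of_pos (ht ω) _).ne')]
        exact Finset.sum_congr rfl fun ω _ => (Real.log_rpow (ht ω) _).symm ▸ rfl
    _ ≤ Real.log (∑ ω, p ω * t ω) := Real.log_le_log hprodpos hgm

end Aux

/-- **Expectation bound on the maximum eigenvalue via the Laplace transform.** For a random
real symmetric `d×d` matrix `X` on a finite probability space, for every `θ > 0`,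
`E[λ_max(X)] ≤ (1/θ)·log(E[tr(exp(θX))])`, and consequently
`E[λ_max(X)] ≤ inf_{θ>0} (1/θ)·log(E[tr(exp(θX))])`. -/
theorem expectation_bound_laplace_transform
    {d : ℕ} (hd : 1 ≤ d)
    (Ω : Type) [Fintype Ω] (p : Ω → ℝ)
    (hp : ∀ ω, 0 ≤ p ω) (hp1 : ∑ ω, p ω = 1)
    (X : Ω → Matrix (Fin d) (Fin d) ℝ)
    (hsymm : ∀ ω, (X ω).IsSymm) :
    (∀ θ : ℝ, 0 < θ →
      ∑ ω, p ω * lamMax (X ω) ≤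
        (1 / θ) * Real.log (∑ ω, p ω * Matrix.trace (NormedSpace.exp (θ • X ω)))) ∧
    ∑ ω, p ω * lamMax (X ω) ≤
      sInf {r : ℝ | ∃ θ : ℝ, 0 < θ ∧
        r = (1 / θ) * Real.log (∑ ω, p ω * Matrix.trace (NormedSpace.exp (θ • X ω)))} := by
  have hH : ∀ ω, (X ω).IsHermitian := fun ω => by
    have := hsymm ω
    rwa [Matrix.IsHermitian, Matrix.conjTranspose_eq_transpose_of_trivial]
  have main : ∀ θ : ℝ, 0 < θ →
      ∑ ω, p ω * lamMax (X ω) ≤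
        (1 / θ) * Real.log (∑ ω, p ω * Matrix.trace (NormedSpace.exp (θ • X ω))) := by
    intro θ hθ
    set t : Ω → ℝ := fun ω => Matrix.trace (NormedSpace.exp (θ • X ω)) with htdef
    have ht : ∀ ω, 0 < t ω := fun ω => trace_exp_pos' hd _ (hH ω) θ
    have h1 : ∀ ω, θ * lamMax (X ω) ≤ Real.log (t ω) := fun ω => by
      rw [← Real.log_exp (θ * lamMax (X ω))]
      exact Real.log_le_log (Real.exp_pos _) (exp_lamMax_le' hd _ (hH ω) hθ)
    have h2 : ∑ ω, p ω * (θ * lamMax (X ω)) ≤ ∑ ω, p ω * Real.log (t ω) :=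
      Finset.sum_le_sum fun ω _ => mul_le_mul_of_nonneg_left (h1 ω) (hp ω)
    have h3 := jensen_log' p t hp hp1 ht
    have h4 : θ * ∑ ω, p ω * lamMax (X ω) ≤ Real.log (∑ ω, p ω * t ω) := by
      rw [Finset.mul_sum]
      refine le_trans (le_of_eq ?_) (h2.trans h3)
      exact Finset.sum_congr rfl fun ω _ => by ring
    calc ∑ ω, p ω * lamMax (X ω) = (1 / θ) * (θ * ∑ ω, p ω * lamMax (X ω)) := by
          field_simp
      _ ≤ (1 / θ) * Real.log (∑ ω, p ω * t ω) :=
          mul_le_mul_of_nonneg_left h4 (by positivity)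
  refine ⟨main, ?_⟩
  apply le_csInf
  · exact ⟨_, 1, one_pos, rfl⟩
  · rintro r ⟨θ, hθ, rfl⟩
    exact main θ hθ
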